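/- The time zone of a temporal k-core equals the union of its rectangles: the set B of all subintervals of the query range [Ts,Te] inducing a core identical to T with TTI [ts,te] equals the union over all LTIs [ts',te'] of T of the rectangles R = {[a,b] | ts' ≤ a ≤ ts, te ≤ b ≤ te'}. -/
import Mathlib


abbrev TEdge : Type := ℕ × ℕ × ℤ

/-- Projection of a temporal edge set over time interval [a,b]. -/
def projE (E : Finset TEdge) (a b : ℤ) : Finset TEdge :=
  E.filter (fun e => a ≤ e.2.2 ∧ e.2.2 ≤ b)

def verts (E : Finset TEdge) : Finset ℕ :=
  E.image (fun e => e.1) ∪ E.image (fun e => e.2.1)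

/-- Distinct neighbors of `v` inside vertex set `S` via edges of `E`. -/
def nbrs (E : Finset TEdge) (S : Finset ℕ) (v : ℕ) : Finset ℕ :=
  S.filter (fun u => u ≠ v ∧
    (E.filter (fun e => (e.1 = u ∧ e.2.1 = v) ∨ (e.1 = v ∧ e.2.1 = u))).Nonempty)

/-- `S` is a `k`-core candidate: every vertex of `S` has ≥ k distinct neighbors in `S`. -/
def isCoreSet (E : Finset TEdge) (k : ℕ) (S : Finset ℕ) : Prop :=
  ∀ v ∈ S, k ≤ (nbrs E S v).card

instance (E : Finset TEdge) (k : ℕ) : DecidablePred (isCoreSet E k) := fun S => by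
  unfold isCoreSet; infer_instance

/-- The `k`-core vertex set of a temporal edge set: union of all candidates. -/
def core (E : Finset TEdge) (k : ℕ) : Finset ℕ :=
  ((verts E).powerset.filter (isCoreSet E k)).sup id

/-- The edges of `E` induced among the `k`-core vertices. -/
def coreEdges (E : Finset TEdge) (k : ℕ) : Finset TEdge :=
  E.filter (fun e => e.1 ∈ core E k ∧ e.2.1 ∈ core E k)

/-- Vertices of the temporal k-core of interval [a,b]. -/
def coreV (E : Finset TEdge) (k : ℕ) (a b : ℤ) : Finset ℕ :=
  core (projE E a b) k

/-- Temporal edges of the temporal k-core of interval [a,b]. -/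
def coreE (E : Finset TEdge) (k : ℕ) (a b : ℤ) : Finset TEdge :=
  coreEdges (projE E a b) k

/-- Two intervals induce identical temporal k-cores (same vertices and temporal edges). -/
def identCore (E : Finset TEdge) (k : ℕ) (a b a' b' : ℤ) : Prop :=
  coreV E k a b = coreV E k a' b' ∧ coreE E k a b = coreE E k a' b'

/-- `[ts',te']` is a loosest time interval (within query range `[Ts,Te]`) of the
temporal k-core induced by `[ts,te]`: it induces an identical core and is maximal
among subintervals of `[Ts,Te]` doing so. -/
def isLTI (E : Finset TEdge) (k : ℕ) (Ts Te ts te ts' te' : ℤ) : Prop :=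
  Ts ≤ ts' ∧ ts' ≤ te' ∧ te' ≤ Te ∧ identCore E k ts' te' ts te ∧
    ∀ a b : ℤ, Ts ≤ a → a ≤ ts' → te' ≤ b → b ≤ Te →
      identCore E k a b ts te → a = ts' ∧ b = te'

lemma projE_mono (E : Finset TEdge) {a b a' b' : ℤ} (ha : a' ≤ a) (hb : b ≤ b') :
    projE E a b ⊆ projE E a' b' := by
  intro e he
  simp only [projE, Finset.mem_filter] at *
  exact ⟨he.1, ha.trans he.2.1, he.2.2.trans hb⟩

lemma verts_mono {E E' : Finset TEdge} (h : E ⊆ E') : verts E ⊆ verts E' :=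
  Finset.union_subset_union (Finset.image_subset_image h) (Finset.image_subset_image h)

lemma nbrs_mono {E E' : Finset TEdge} (h : E ⊆ E') (S : Finset ℕ) (v : ℕ) :
    nbrs E S v ⊆ nbrs E' S v := by
  intro u hu
  simp only [nbrs, Finset.mem_filter] at *
  exact ⟨hu.1, hu.2.1, hu.2.2.mono (Finset.filter_subset_filter _ h)⟩

lemma core_mono {E E' : Finset TEdge} (h : E ⊆ E') (k : ℕ) : core E k ⊆ core E' k := by
  intro v hv
  unfold core at *
  rw [Finset.mem_sup] at *
  obtain ⟨S, hS, hvS⟩ := hv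
  rw [Finset.mem_filter, Finset.mem_powerset] at hS
  refine ⟨S, ?_, hvS⟩
  rw [Finset.mem_filter, Finset.mem_powerset]
  exact ⟨hS.1.trans (verts_mono h),
    fun w hw => (hS.2 w hw).trans (Finset.card_le_card (nbrs_mono h S w))⟩

instance identCore_dec (E : Finset TEdge) (k : ℕ) (a b a' b' : ℤ) :
    Decidable (identCore E k a b a' b') := by
  unfold identCore; infer_instance

/-- Rectangle lemma: a subinterval of an identical-core interval that still
contains [ts,te] induces the same core. -/
lemma rect (E : Finset TEdge) (k : ℕ) {ts te c d a b : ℤ}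
    (h : identCore E k c d ts te)
    (hca : c ≤ a) (hats : a ≤ ts) (hteb : te ≤ b) (hbd : b ≤ d) :
    identCore E k a b ts te := by
  have h1 : projE E ts te ⊆ projE E a b := projE_mono E hats hteb
  have h2 : projE E a b ⊆ projE E c d := projE_mono E hca hbd
  have hV1 : coreV E k ts te ⊆ coreV E k a b := core_mono h1 k
  have hV2 : coreV E k a b ⊆ coreV E k c d := core_mono h2 k
  have hVeq : coreV E k a b = coreV E k ts te :=
    Finset.Subset.antisymm (h.1 ▸ hV2) hV1
  refine ⟨hVeq, Finset.Subset.antisymm ?_ ?_⟩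
  · intro e he
    have he' : e ∈ coreE E k c d := by
      simp only [coreE, coreEdges, Finset.mem_filter] at he ⊢
      refine ⟨h2 he.1, ?_, ?_⟩
      · have := he.2.1
        change e.1 ∈ coreV E k a b at this
        rw [hVeq, ← h.1] at this
        exact this
      · have := he.2.2
        change e.2.1 ∈ coreV E k a b at this
        rw [hVeq, ← h.1] at this
        exact this
    rw [h.2] at he'
    exact he'
  · intro e he
    simp only [coreE, coreEdges, Finset.mem_filter] at he ⊢
    refine ⟨h1 he.1, ?_, ?_⟩
    · have := he.2.1
      change e.1 ∈ coreV E k ts te at this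
      rw [← hVeq] at this
      exact this
    · have := he.2.2
      change e.2.1 ∈ coreV E k ts te at this
      rw [← hVeq] at this
      exact this

/-- the time zone of a temporal k-core (all subintervals of [Ts,Te]
inducing a core identical to the one with TTI [ts,te]) equals the union over its
LTIs [ts',te'] of the rectangles {[a,b] | ts' ≤ a ≤ ts, te ≤ b ≤ te'}. -/
theorem stmt_12 (E : Finset TEdge) (k : ℕ) (Ts Te ts te : ℤ)
    (hTs : Ts ≤ ts) (hTe : te ≤ Te)
    (hne : (coreE E k ts te).Nonempty)
    (hmin : IsLeast {t : ℤ | ∃ e ∈ coreE E k ts te, e.2.2 = t} ts)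
    (hmax : IsGreatest {t : ℤ | ∃ e ∈ coreE E k ts te, e.2.2 = t} te) :
    ∀ a b : ℤ, Ts ≤ a → a ≤ b → b ≤ Te →
      (identCore E k a b ts te ↔
        ∃ ts' te' : ℤ, isLTI E k Ts Te ts te ts' te' ∧
          ts' ≤ a ∧ a ≤ ts ∧ te ≤ b ∧ b ≤ te') := by
  have hstte : ts ≤ te := hmin.2 hmax.1
  -- from identCore we can extract bounds on the interval
  have bounds : ∀ a b : ℤ, identCore E k a b ts te → a ≤ ts ∧ te ≤ b := by
    intro a b h
    obtain ⟨e1, he1, he1t⟩ := hmin.1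
    obtain ⟨e2, he2, he2t⟩ := hmax.1
    rw [← h.2] at he1 he2
    have p1 : e1 ∈ projE E a b := Finset.filter_subset _ _ he1
    have p2 : e2 ∈ projE E a b := Finset.filter_subset _ _ he2
    simp only [projE, Finset.mem_filter] at p1 p2
    constructor
    · rw [← he1t]; exact p1.2.1
    · rw [← he2t]; exact p2.2.2
  intro a b hTsa hab hbTe
  constructor
  · intro hid
    obtain ⟨hats, hteb⟩ := bounds a b hid
    -- extend b upward
    set Sb := (Finset.Icc b Te).filter (fun d => identCore E k a d ts te) with hSb
    have hbSb : b ∈ Sb := by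
      simp only [hSb, Finset.mem_filter, Finset.mem_Icc]
      exact ⟨⟨le_refl b, hbTe⟩, hid⟩
    have hSbne : Sb.Nonempty := ⟨b, hbSb⟩
    set te' := Sb.max' hSbne with hte'
    have hte'mem := Sb.max'_mem hSbne
    simp only [hSb, Finset.mem_filter, Finset.mem_Icc] at hte'mem
    obtain ⟨⟨hbte', hte'Te⟩, hidte'⟩ := hte'mem
    -- extend a downward
    set Sa := (Finset.Icc Ts a).filter (fun c => identCore E k c te' ts te) with hSa
    have haSa : a ∈ Sa := by
      simp only [hSa, Finset.mem_filter, Finset.mem_Icc]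
      exact ⟨⟨hTsa, le_refl a⟩, hidte'⟩
    have hSane : Sa.Nonempty := ⟨a, haSa⟩
    set ts' := Sa.min' hSane with hts'
    have hts'mem := Sa.min'_mem hSane
    simp only [hSa, Finset.mem_filter, Finset.mem_Icc] at hts'mem
    obtain ⟨⟨hTsts', hts'a⟩, hidts'⟩ := hts'mem
    refine ⟨ts', te', ⟨hTsts', hts'a.trans (hab.trans hbte'), hte'Te, hidts', ?_⟩,
      hts'a, hats, hteb, hbte'⟩
    -- maximality
    intro c d hTsc hcts' hte'd hdTe hcd
    have hcd' := bounds c d hcd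
    have hida_d : identCore E k a d ts te :=
      rect E k hcd (hcts'.trans hts'a) hats hcd'.2 (le_refl d)
    have hdSb : d ∈ Sb := by
      simp only [hSb, Finset.mem_filter, Finset.mem_Icc]
      exact ⟨⟨hbte'.trans hte'd, hdTe⟩, hida_d⟩
    have hdte' : d ≤ te' := Sb.le_max' d hdSb
    have hdeq : d = te' := le_antisymm hdte' hte'd
    have hcSa : c ∈ Sa := by
      simp only [hSa, Finset.mem_filter, Finset.mem_Icc]
      refine ⟨⟨hTsc, hcts'.trans hts'a⟩, ?_⟩
      rw [← hdeq]; exact hcd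
    have hts'c : ts' ≤ c := Sa.min'_le c hcSa
    exact ⟨le_antisymm hcts' hts'c, hdeq⟩
  · rintro ⟨ts', te', ⟨_, _, _, hid, _⟩, hts'a, hats, hteb, hbte'⟩
    exact rect E k hid hts'a hats hteb hbte'
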